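/- arXiv:0904.3841 — 3 statements merged into one kernel-verified Lean document; each statement's English description precedes it below -/
import Mathlib

section
/- Let G be a connected nilpotent Lie group and φ: ℝ → G a one-parameter subgroup (continuous homomorphism). If φ(t₀) lies in the center of G for some t₀ ≠ 0, then φ(t) is central for all t ∈ ℝ. -/
open Subgroup
open scoped commutatorElement

private def itComm {G : Type*} [Group G] : List G → G → G
  | [], x => x
  | g :: L, x => ⁅g, itComm L x⁆

@[simp] private lemma itComm_nil {G : Type*} [Group G] (x : G) : itComm [] x = x := rfl

@[simp] private lemma itComm_cons {G : Type*} [Group G] (g : G) (L : List G) (x : G) :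
    itComm (g :: L) x = ⁅g, itComm L x⁆ := rfl

@[simp] private lemma itComm_one {G : Type*} [Group G] (L : List G) : itComm L (1 : G) = 1 := by
  induction L with
  | nil => rfl
  | cons g L ih => simp [ih]

private lemma comm_mem_of_mem_succ {G : Type*} [Group G] {j : ℕ} {v : G}
    (hv : v ∈ Subgroup.upperCentralSeries G (j + 1)) (g : G) : ⁅g, v⁆ ∈ Subgroup.upperCentralSeries G j := by
  rw [Subgroup.mem_upperCentralSeries_succ_iff] at hv
  have h1 : ⁅v, g⁆ ∈ Subgroup.upperCentralSeries G j := by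
    simpa [commutatorElement_def] using hv g
  rw [← commutatorElement_inv]
  exact inv_mem h1

private lemma itComm_mem_ucs {G : Type*} [Group G] (L : List G) (j : ℕ) (x : G)
    (hx : x ∈ Subgroup.upperCentralSeries G (L.length + j)) : itComm L x ∈ Subgroup.upperCentralSeries G j := by
  induction L generalizing j with
  | nil => simpa using hx
  | cons g L ih =>
    have hx' : x ∈ Subgroup.upperCentralSeries G (L.length + (j + 1)) := by
      have e : L.length + (j + 1) = (g :: L).length + j := by simp; omega
      rw [e]; exact hx
    exact comm_mem_of_mem_succ (ih (j + 1) hx') g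

private lemma mk_mem_center {G : Type*} [Group G] (j : ℕ) {x : G}
    (hx : x ∈ Subgroup.upperCentralSeries G (j + 1)) :
    ((x : G ⧸ Subgroup.upperCentralSeries G j)) ∈ Subgroup.center (G ⧸ Subgroup.upperCentralSeries G j) := by
  rw [Subgroup.mem_center_iff]
  intro q
  induction q using QuotientGroup.induction_on with
  | _ y =>
    show ((y * x : G) : G ⧸ Subgroup.upperCentralSeries G j) = ((x * y : G) : _)
    rw [QuotientGroup.eq]
    have hxi : x⁻¹ ∈ Subgroup.upperCentralSeries G (j + 1) := inv_mem hx
    have h2 := (Subgroup.mem_upperCentralSeries_succ_iff).mp hxi y⁻¹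
    simpa [commutatorElement_def, mul_assoc] using h2

private lemma comm_mul_central {H : Type*} [Group H] (h a b z : H)
    (hz : z ∈ Subgroup.center H) (hB : ⁅h, b⁆ ∈ Subgroup.center H) :
    ⁅h, a * b * z⁆ = ⁅h, a⁆ * ⁅h, b⁆ := by
  rw [Subgroup.mem_center_iff] at hz hB
  have hz' : h⁻¹ * z = z * h⁻¹ := hz h⁻¹
  have hB' : a⁻¹ * ⁅h, b⁆ = ⁅h, b⁆ * a⁻¹ := hB a⁻¹
  simp only [commutatorElement_def] at hB' ⊢
  calc h * (a * b * z) * h⁻¹ * (a * b * z)⁻¹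
      = h * a * b * (z * h⁻¹) * z⁻¹ * b⁻¹ * a⁻¹ := by group
    _ = h * a * b * (h⁻¹ * z) * z⁻¹ * b⁻¹ * a⁻¹ := by rw [← hz']
    _ = h * a * h⁻¹ * (h * b * h⁻¹ * b⁻¹ * a⁻¹) := by group
    _ = h * a * h⁻¹ * (a⁻¹ * (h * b * h⁻¹ * b⁻¹)) := by rw [← hB']
    _ = h * a * h⁻¹ * a⁻¹ * (h * b * h⁻¹ * b⁻¹) := by group

private lemma mem_ucs_of_vanish {G : Type*} [Group G] (φ : ℝ → G) (k : ℕ)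
    (hyp : ∀ L : List G, L.length = k + 1 → ∀ t, itComm L (φ t) = 1) :
    ∀ (m : ℕ) (M : List G), M.length + m = k + 1 → ∀ t,
      itComm M (φ t) ∈ Subgroup.upperCentralSeries G m := by
  intro m
  induction m with
  | zero =>
    intro M hM t
    have h1 : itComm M (φ t) = 1 := hyp M (by omega) t
    rw [h1]
    exact one_mem _
  | succ m ih =>
    intro M hM t
    rw [Subgroup.mem_upperCentralSeries_succ_iff]
    intro y
    have h1 : itComm (y :: M) (φ t) ∈ Subgroup.upperCentralSeries G m :=
      ih (y :: M) (by simp; omega) t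
    rw [itComm_cons] at h1
    have h2 : ⁅itComm M (φ t), y⁆ ∈ Subgroup.upperCentralSeries G m := by
      rw [← commutatorElement_inv]
      exact inv_mem h1
    simpa [commutatorElement_def, mul_assoc] using h2

private lemma itComm_add {G : Type*} [Group G] (φ : ℝ → G)
    (hφhom : ∀ s t : ℝ, φ (s + t) = φ s * φ t) (k : ℕ)
    (hyp : ∀ L : List G, L.length = k + 1 → ∀ t, itComm L (φ t) = 1) :
    ∀ (M : List G) (j : ℕ), M.length + j = k → ∀ s t : ℝ,
      ∃ z ∈ Subgroup.upperCentralSeries G j,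
        itComm M (φ (s + t)) = itComm M (φ s) * itComm M (φ t) * z := by
  intro M
  induction M with
  | nil =>
    intro j hj s t
    refine ⟨1, one_mem _, by simp [hφhom]⟩
  | cons h M' ih =>
    intro j hj s t
    obtain ⟨z, hz, heq⟩ := ih (j + 1) (by simp at hj ⊢; omega) s t
    set N := Subgroup.upperCentralSeries G j with hN
    set a := itComm M' (φ s) with ha
    set b := itComm M' (φ t) with hb
    have hBmem : itComm (h :: M') (φ t) ∈ Subgroup.upperCentralSeries G (j + 1) :=
      mem_ucs_of_vanish φ k hyp (j + 1) (h :: M') (by simp at hj ⊢; omega) t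
    have hq : QuotientGroup.mk' N (⁅h, a⁆ * ⁅h, b⁆)
        = QuotientGroup.mk' N (⁅h, a * b * z⁆) := by
      rw [map_mul, map_commutatorElement, map_commutatorElement, map_commutatorElement,
        map_mul, map_mul]
      have hzc : (QuotientGroup.mk' N z) ∈ Subgroup.center (G ⧸ N) := mk_mem_center j hz
      have hBc : ⁅QuotientGroup.mk' N h, QuotientGroup.mk' N b⁆ ∈ Subgroup.center (G ⧸ N) := by
        rw [← map_commutatorElement]
        exact mk_mem_center j (by simpa using hBmem)
      exact (comm_mul_central _ _ _ _ hzc hBc).symm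
    obtain ⟨w, hw, hweq⟩ := (QuotientGroup.mk'_eq_mk' (N := N)).mp hq
    refine ⟨w, hw, ?_⟩
    rw [itComm_cons, heq, itComm_cons, itComm_cons, ← ha, ← hb, ← hweq]

open Set Filter Metric

private lemma exists_nss {E M : Type*} [NormedAddCommGroup E] [NormedSpace ℝ E]
    [TopologicalSpace M] (I : ModelWithCorners ℝ E M)
    (G : Type*) [Group G] [TopologicalSpace G] [IsTopologicalGroup G]
    [ChartedSpace M G] [LieGroup I (⊤ : ℕ∞) G] :
    ∃ U : Set G, IsOpen U ∧ (1 : G) ∈ U ∧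
      ∀ H : Subgroup G, (H : Set G) ⊆ U → ∀ h ∈ H, h = 1 := by
  classical
  set c := extChartAt I (1 : G) with hc
  set x₀ := c (1 : G) with hx₀
  have h1src : (1 : G) ∈ c.source := mem_extChartAt_source 1
  have hx₀tgt : x₀ ∈ c.target := c.map_source h1src
  have hx₀range : x₀ ∈ range I := extChartAt_target_subset_range (1 : G) hx₀tgt
  -- the multiplication written in the extended chart
  set q : E × E → E := fun p => c (c.symm p.1 * c.symm p.2) with hq
  have hmd : MDifferentiableAt (I.prod I) I (fun p : G × G => p.1 * p.2) (1, 1) :=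
    (contMDiff_mul I ((⊤ : ℕ∞) : WithTop ℕ∞) (G := G)).contMDiffAt.mdifferentiableAt (by simp)
  rw [mdifferentiableAt_iff] at hmd
  obtain ⟨-, hdiff⟩ := hmd
  have hqwr : writtenInExtChartAt (I.prod I) I ((1 : G), (1 : G)) (fun p : G × G => p.1 * p.2)
      = q := by
    funext p
    simp only [writtenInExtChartAt, Function.comp_apply, extChartAt_prod, one_mul,
      PartialEquiv.prod_symm, PartialEquiv.prod_coe, hq, ← hc]
  have hpt : (extChartAt (I.prod I) ((1 : G), (1 : G))) ((1 : G), (1 : G)) = (x₀, x₀) := by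
    simp only [extChartAt_prod, PartialEquiv.prod_coe]; rfl
  rw [hqwr, hpt, ModelWithCorners.range_prod] at hdiff
  set S : Set (E × E) := range I ×ˢ range I with hS
  have hx₀S : (x₀, x₀) ∈ S := ⟨hx₀range, hx₀range⟩
  set D := fderivWithin ℝ q S (x₀, x₀) with hD
  have hDq : HasFDerivWithinAt q D S (x₀, x₀) := hdiff.hasFDerivWithinAt
  have hq0 : q (x₀, x₀) = x₀ := by
    simp only [hq]
    rw [c.left_inv h1src, mul_one]
  -- identify the partial derivatives
  have huniq : UniqueDiffWithinAt ℝ (range I) x₀ := I.uniqueDiffOn x₀ hx₀range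
  have hpartial : ∀ (ι : E → E × E) (Lι : E →L[ℝ] E × E), HasFDerivAt ι Lι x₀ →
      MapsTo ι (range I) S → (∀ u ∈ c.target, q (ι u) = u) → ι x₀ = (x₀, x₀) →
      D.comp Lι = ContinuousLinearMap.id ℝ E := by
    intro ι Lι hι hmaps hqι hιx₀
    have hDq' : HasFDerivWithinAt q D S (ι x₀) := by rw [hιx₀]; exact hDq
    have hcomp : HasFDerivWithinAt (q ∘ ι) (D.comp Lι) (range I) x₀ :=
      hDq'.comp x₀ hι.hasFDerivWithinAt hmaps
    have hev : (fun u => u) =ᶠ[nhdsWithin x₀ (range I)] (q ∘ ι) := by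
      filter_upwards [extChartAt_target_mem_nhdsWithin (1 : G)] with u hu
      exact (hqι u hu).symm
    have hid : HasFDerivWithinAt (fun u : E => u) (D.comp Lι) (range I) x₀ :=
      hcomp.congr_of_eventuallyEq hev (by simp [Function.comp, hιx₀, hq0])
    exact (huniq.eq hid (hasFDerivWithinAt_id x₀ (range I))).symm ▸ rfl
  have hcsymmx₀ : c.symm x₀ = 1 := c.left_inv h1src
  have hL₁ : D.comp ((ContinuousLinearMap.id ℝ E).prod (0 : E →L[ℝ] E))
      = ContinuousLinearMap.id ℝ E := by
    refine hpartial (fun u => (u, x₀)) _ (HasFDerivAt.prodMk (hasFDerivAt_id x₀) (hasFDerivAt_const x₀ x₀))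
      (fun u hu => ⟨hu, hx₀range⟩) ?_ rfl
    intro u hu
    show c (c.symm u * c.symm x₀) = u
    rw [hcsymmx₀, mul_one, c.right_inv hu]
  have hL₂ : D.comp ((0 : E →L[ℝ] E).prod (ContinuousLinearMap.id ℝ E))
      = ContinuousLinearMap.id ℝ E := by
    refine hpartial (fun u => (x₀, u)) _ (HasFDerivAt.prodMk (hasFDerivAt_const x₀ x₀) (hasFDerivAt_id x₀))
      (fun u hu => ⟨hx₀range, hu⟩) ?_ rfl
    intro u hu
    show c (c.symm x₀ * c.symm u) = u
    rw [hcsymmx₀, one_mul, c.right_inv hu]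
  have hDdiag : ∀ w : E, D (w, w) = w + w := by
    intro w
    have e1 : D (w, (0 : E)) = w := by
      have := congrArg (fun (L : E →L[ℝ] E) => L w) hL₁
      simpa using this
    have e2 : D ((0 : E), w) = w := by
      have := congrArg (fun (L : E →L[ℝ] E) => L w) hL₂
      simpa using this
    have : (w, w) = ((w, (0:E)) + ((0:E), w)) := by simp
    rw [this, map_add, e1, e2]
  -- quantitative estimate
  have hlo := hDq.isLittleO.def (by norm_num : (0:ℝ) < 1/2)
  rw [Filter.eventually_iff, Metric.mem_nhdsWithin_iff] at hlo
  obtain ⟨δ, hδ, hball⟩ := hlo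
  refine ⟨c.source ∩ c ⁻¹' Metric.ball x₀ δ,
    (continuousOn_extChartAt (1:G)).isOpen_inter_preimage (isOpen_extChartAt_source (1:G))
      Metric.isOpen_ball, ⟨h1src, Metric.mem_ball_self hδ⟩, ?_⟩
  intro H hH
  have key : ∀ γ ∈ H, (3/2) * ‖c γ - x₀‖ ≤ ‖c (γ * γ) - x₀‖ := by
    intro γ hγ
    obtain ⟨hγsrc, hγball⟩ := hH hγ
    have hγball' : dist (c γ) x₀ < δ := Metric.mem_ball.mp hγball
    have hu_tgt : c γ ∈ c.target := c.map_source hγsrc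
    have hpS : ((c γ, c γ) : E × E) ∈ S :=
      ⟨extChartAt_target_subset_range (1:G) hu_tgt, extChartAt_target_subset_range (1:G) hu_tgt⟩
    have hpball : ((c γ, c γ) : E × E) ∈ Metric.ball ((x₀, x₀) : E × E) δ := by
      rw [Metric.mem_ball, Prod.dist_eq]
      simpa using hγball'
    have hest := hball ⟨hpball, hpS⟩
    simp only [Set.mem_setOf_eq] at hest
    have hqγ : q (c γ, c γ) = c (γ * γ) := by
      show c (c.symm (c γ) * c.symm (c γ)) = c (γ * γ)
      rw [c.left_inv hγsrc]
    set w := c γ - x₀ with hw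
    have hsub : ((c γ, c γ) : E × E) - (x₀, x₀) = (w, w) := rfl
    have hnw : ‖((w, w) : E × E)‖ = ‖w‖ := by
      rw [Prod.norm_def]; simp
    rw [hsub, hq0, hqγ, hDdiag, hnw] at hest
    have h2 : |‖c (γ * γ) - x₀‖ - ‖w + w‖| ≤ ‖c (γ * γ) - x₀ - (w + w)‖ :=
      abs_norm_sub_norm_le _ _
    have h4 := neg_abs_le (‖c (γ * γ) - x₀‖ - ‖w + w‖)
    have hww : ‖w + w‖ = 2 * ‖w‖ := by
      rw [show w + w = (2:ℝ) • w by rw [two_smul], norm_smul]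
      simp
    linarith
  -- the supremum argument
  set T := (fun γ : G => ‖c γ - x₀‖) '' (H : Set G) with hT
  have hTne : T.Nonempty := ⟨‖c (1:G) - x₀‖, ⟨1, H.one_mem, rfl⟩⟩
  have hTbdd : BddAbove T := by
    refine ⟨δ, ?_⟩
    rintro _ ⟨γ, hγ, rfl⟩
    have := (hH hγ).2
    rw [Set.mem_preimage, Metric.mem_ball, dist_eq_norm] at this
    exact this.le
  set s := sSup T with hs
  have hsle : ∀ γ ∈ H, ‖c γ - x₀‖ ≤ s := fun γ hγ => le_csSup hTbdd ⟨γ, hγ, rfl⟩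
  by_cases hspos : 0 < s
  · exfalso
    obtain ⟨_, ⟨γ, hγ, rfl⟩, hγgt⟩ := exists_lt_of_lt_csSup hTne
      (show 3/4 * s < s by linarith)
    have h2 := key γ hγ
    have h3 := hsle (γ * γ) (mul_mem hγ hγ)
    linarith
  · intro h hh
    have h0 : ‖c h - x₀‖ ≤ 0 := le_trans (hsle h hh) (not_lt.mp hspos)
    have : c h = x₀ := by
      have := norm_le_zero_iff.mp h0
      exact sub_eq_zero.mp this
    exact c.injOn (hH hh).1 h1src this

private lemma closed_one_of_nss {G : Type*} [Group G] [TopologicalSpace G] [IsTopologicalGroup G]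
    {U : Set G} (hUopen : IsOpen U) (hU1 : (1 : G) ∈ U)
    (hUsub : ∀ H : Subgroup G, (H : Set G) ⊆ U → ∀ h ∈ H, h = 1) :
    IsClosed ({1} : Set G) := by
  have hsub : _root_.closure (((⊥ : Subgroup G) : Set G)) ⊆ U := by
    intro x hx
    rw [Subgroup.coe_bot, _root_.mem_closure_iff] at hx
    obtain ⟨y, hyO, hy1⟩ := hx ((fun y : G => x * y⁻¹) ⁻¹' U)
      (hUopen.preimage (continuous_const.mul continuous_inv))
      (by simp [hU1])
    rw [Set.mem_singleton_iff] at hy1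
    subst hy1
    simpa using hyO
  have hKU : (((⊥ : Subgroup G).topologicalClosure : Subgroup G) : Set G) ⊆ U := by
    rw [Subgroup.topologicalClosure_coe]
    exact hsub
  have hone := hUsub _ hKU
  have hcc : _root_.closure ({1} : Set G) ⊆ ({1} : Set G) := by
    intro x hx
    have hxK : x ∈ (⊥ : Subgroup G).topologicalClosure := by
      rw [← SetLike.mem_coe, Subgroup.topologicalClosure_coe, Subgroup.coe_bot]
      exact hx
    exact hone x hxK
  exact isClosed_of_closure_subset hcc

private lemma itComm_central {G : Type*} [Group G] {x : G} (hx : x ∈ Subgroup.center G)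
    (a : G) (M : List G) : itComm (a :: M) x = 1 := by
  induction M generalizing a with
  | nil =>
    rw [itComm_cons, itComm_nil, commutatorElement_eq_one_iff_mul_comm]
    exact Subgroup.mem_center_iff.mp hx a
  | cons b M' ih =>
    rw [itComm_cons, ih b, commutatorElement_one_right]

private lemma itComm_cont {X G : Type*} [TopologicalSpace X] [Group G] [TopologicalSpace G]
    [IsTopologicalGroup G] (L : List G) {f : X → G} (hf : Continuous f) :
    Continuous fun t => itComm L (f t) := by
  induction L with
  | nil => simpa using hf
  | cons g L ih =>
    simp only [itComm_cons, commutatorElement_def]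
    exact ((continuous_const.mul ih).mul continuous_const).mul ih.inv

private lemma hom_trivial_of_range_subset {G : Type*} [Group G] (u : ℝ → G)
    (huadd : ∀ s t, u (s + t) = u s * u t) {t₀ : ℝ} (ht₀ : t₀ ≠ 0) (hut₀ : u t₀ = 1)
    (U : Set G) (hUsub : ∀ H : Subgroup G, (H : Set G) ⊆ U → ∀ h ∈ H, h = 1)
    (hU : ∀ s ∈ Set.Icc (0:ℝ) |t₀|, u s ∈ U) : ∀ s, u s = 1 := by
  have habs : |t₀| ≠ 0 := abs_ne_zero.mpr ht₀
  have hu0 : u 0 = 1 := by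
    have h := huadd 0 0
    rw [add_zero] at h
    exact left_eq_mul.mp h
  have huneg : ∀ x, u (-x) = (u x)⁻¹ := by
    intro x
    have h := huadd x (-x)
    rw [add_neg_cancel, hu0] at h
    exact eq_inv_of_mul_eq_one_right h.symm
  have hup : u |t₀| = 1 := by
    rcases abs_cases t₀ with ⟨h1, _⟩ | ⟨h1, _⟩
    · rw [h1]; exact hut₀
    · rw [h1, huneg, hut₀, inv_one]
  have hper : ∀ (x : ℝ) (m : ℤ), u (x + |t₀| * m) = u x := by
    intro x m
    induction m using Int.induction_on with
    | zero => simp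
    | succ m ih =>
      push_cast
      push_cast at ih
      rw [show x + |t₀| * ((m : ℝ) + 1) = (x + |t₀| * (m : ℝ)) + |t₀| from by ring,
        huadd, hup, mul_one]
      exact ih
    | pred m ih =>
      push_cast
      push_cast at ih
      rw [show x + |t₀| * (-(m : ℝ) - 1) = (x + |t₀| * (-(m : ℝ))) + (-|t₀|) from by ring,
        huadd, huneg, hup, inv_one, mul_one]
      exact ih
  have hrange : ∀ s, u s ∈ U := by
    intro s
    have hfr0 : (0:ℝ) ≤ Int.fract (s / |t₀|) := Int.fract_nonneg _
    have hfr1 : Int.fract (s / |t₀|) < 1 := Int.fract_lt_one _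
    have hm : s = |t₀| * Int.fract (s / |t₀|) + |t₀| * ⌊s / |t₀|⌋ := by
      rw [Int.fract]
      field_simp
      ring
    have h1 : u s = u (|t₀| * Int.fract (s / |t₀|)) := by
      conv_lhs => rw [hm]
      exact hper _ _
    rw [h1]
    refine hU _ ⟨mul_nonneg (abs_nonneg _) hfr0, ?_⟩
    exact mul_le_of_le_one_right (abs_nonneg _) hfr1.le
  intro s
  set H : Subgroup G :=
    { carrier := Set.range u
      one_mem' := ⟨0, hu0⟩
      mul_mem' := by
        rintro a b ⟨x, rfl⟩ ⟨y, rfl⟩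
        exact ⟨x + y, huadd x y⟩
      inv_mem' := by
        rintro a ⟨x, rfl⟩
        exact ⟨-x, huneg x⟩ } with hH
  have hHU : (H : Set G) ⊆ U := by
    rintro a ⟨x, rfl⟩
    exact hrange x
  exact hUsub H hHU (u s) ⟨s, rfl⟩

private lemma step_lemma {E M : Type*} [NormedAddCommGroup E] [NormedSpace ℝ E]
    [TopologicalSpace M] (I : ModelWithCorners ℝ E M)
    (G : Type*) [Group G] [TopologicalSpace G] [IsTopologicalGroup G]
    [ChartedSpace M G] [LieGroup I (⊤ : ℕ∞) G] [ConnectedSpace G]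
    (φ : ℝ → G) (hφcont : Continuous φ) (hφhom : ∀ s t : ℝ, φ (s + t) = φ s * φ t)
    (t₀ : ℝ) (ht₀ : t₀ ≠ 0) (hcentral : φ t₀ ∈ Subgroup.center G)
    (k : ℕ) (hk : 1 ≤ k)
    (hyp : ∀ L : List G, L.length = k + 1 → ∀ t, itComm L (φ t) = 1) :
    ∀ L : List G, L.length = k → ∀ t, itComm L (φ t) = 1 := by
  obtain ⟨U, hUopen, hU1, hUsub⟩ := exists_nss I G
  have hclosed1 : IsClosed ({1} : Set G) := closed_one_of_nss hUopen hU1 hUsub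
  intro L hL t
  rcases L with _ | ⟨g, L'⟩
  · exact absurd hL (by simp; omega)
  have hL' : L'.length + 1 = k := by simpa using hL
  have uhom : ∀ (g' : G) (s t' : ℝ),
      itComm (g' :: L') (φ (s + t')) = itComm (g' :: L') (φ s) * itComm (g' :: L') (φ t') := by
    intro g' s t'
    obtain ⟨z, hz, heq⟩ := itComm_add φ hφhom k hyp (g' :: L') 0 (by simp [← hL']) s t'
    rw [Subgroup.upperCentralSeries_zero, Subgroup.mem_bot] at hz
    rw [heq, hz, mul_one]
  have hxcont : Continuous fun t : ℝ => itComm L' (φ t) := itComm_cont L' hφcont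
  have hΨcont : Continuous fun p : G × ℝ => itComm (p.1 :: L') (φ p.2) := by
    simp only [itComm_cons, commutatorElement_def]
    exact ((continuous_fst.mul (hxcont.comp continuous_snd)).mul continuous_fst.inv).mul
      (hxcont.comp continuous_snd).inv
  set W : Set G := {g' : G | ∀ s : ℝ, itComm (g' :: L') (φ s) = 1} with hW
  have hWone : (1 : G) ∈ W := by
    intro s
    rw [itComm_cons, commutatorElement_def]
    simp
  have hWclosed : IsClosed W := by
    have hWeq : W = ⋂ s : ℝ, (fun g' : G => itComm (g' :: L') (φ s)) ⁻¹' {1} := by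
      ext g'
      simp [hW, Set.mem_iInter]
    rw [hWeq]
    refine isClosed_iInter fun s => IsClosed.preimage ?_ hclosed1
    exact hΨcont.comp (continuous_id.prodMk continuous_const)
  have hWopen : IsOpen W := by
    rw [isOpen_iff_mem_nhds]
    intro g₀ hg₀
    have hev : ∀ᶠ g' in nhds g₀, ∀ s ∈ Set.Icc (0:ℝ) |t₀|,
        itComm (g' :: L') (φ s) ∈ U := by
      refine IsCompact.eventually_forall_of_forall_eventually isCompact_Icc ?_
      intro s hs
      have hval : itComm (g₀ :: L') (φ s) = 1 := hg₀ s
      refine hΨcont.continuousAt.preimage_mem_nhds ?_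
      rw [hval]
      exact hUopen.mem_nhds hU1
    filter_upwards [hev] with g' hg'
    exact hom_trivial_of_range_subset (fun s => itComm (g' :: L') (φ s)) (uhom g') ht₀
      (itComm_central hcentral g' L') U hUsub hg'
  have hWuniv : W = Set.univ := IsClopen.eq_univ ⟨hWclosed, hWopen⟩ ⟨1, hWone⟩
  have hgW : g ∈ W := by rw [hWuniv]; trivial
  exact hgW t

/-- In a connected nilpotent Lie group, a one-parameter subgroup with one
nontrivial central value is entirely central. -/
theorem oneParameter_central_of_central_value
    {E M : Type*} [NormedAddCommGroup E] [NormedSpace ℝ E] [TopologicalSpace M]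
    (I : ModelWithCorners ℝ E M)
    (G : Type*) [Group G] [TopologicalSpace G] [IsTopologicalGroup G]
    [ChartedSpace M G] [LieGroup I (⊤ : ℕ∞) G] [ConnectedSpace G] [Group.IsNilpotent G]
    (φ : ℝ → G) (hφcont : Continuous φ) (hφhom : ∀ s t : ℝ, φ (s + t) = φ s * φ t)
    (t₀ : ℝ) (ht₀ : t₀ ≠ 0) (hcentral : φ t₀ ∈ Subgroup.center G) :
    ∀ t : ℝ, φ t ∈ Subgroup.center G := by
  obtain ⟨n, hn⟩ := Group.IsNilpotent.nilpotent (G := G)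
  have baseN : ∀ L : List G, L.length = n → ∀ t, itComm L (φ t) = 1 := by
    intro L hL t
    have h1 : φ t ∈ Subgroup.upperCentralSeries G (L.length + 0) := by
      rw [hL, Nat.add_zero, hn]; trivial
    have h2 := itComm_mem_ucs L 0 (φ t) h1
    rwa [Subgroup.upperCentralSeries_zero, Subgroup.mem_bot] at h2
  have mono : ∀ k, (∀ L : List G, L.length = k → ∀ t, itComm L (φ t) = 1) →
      ∀ L : List G, L.length = k + 1 → ∀ t, itComm L (φ t) = 1 := by
    intro k hk L hL t
    rcases L with _ | ⟨g, L'⟩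
    · simp at hL
    · rw [itComm_cons, hk L' (by simpa using hL) t, commutatorElement_one_right]
  have Rge : ∀ m (L : List G), L.length = n + m → ∀ t, itComm L (φ t) = 1 := by
    intro m
    induction m with
    | zero => intro L hL t; exact baseN L (by omega) t
    | succ m ih => exact mono (n + m) ih
  have key : ∀ d k, 1 ≤ k → n ≤ k + d →
      ∀ L : List G, L.length = k → ∀ t, itComm L (φ t) = 1 := by
    intro d
    induction d with
    | zero =>
      intro k hk1 hkn L hL t
      exact Rge (k - n) L (by omega) t
    | succ d ih =>
      intro k hk1 hkn
      by_cases h : n ≤ k + d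
      · exact ih k hk1 h
      · exact step_lemma I G φ hφcont hφhom t₀ ht₀ hcentral k hk1
          (ih (k + 1) (by omega) (by omega))
  intro t
  rcases Nat.eq_zero_or_pos n with hn0 | hn1
  · subst hn0
    rw [Subgroup.upperCentralSeries_zero] at hn
    have hbot : φ t ∈ (⊥ : Subgroup G) := by rw [hn]; trivial
    rw [Subgroup.mem_bot] at hbot
    rw [hbot]
    exact Subgroup.one_mem _
  · have R1 := key (n - 1) 1 le_rfl (by omega)
    rw [Subgroup.mem_center_iff]
    intro g
    have h1 := R1 [g] rfl t
    rw [itComm_cons, itComm_nil] at h1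
    exact commutatorElement_eq_one_iff_mul_comm.mp h1
end

section
/- Let 0 → A → E → G → 1 be an exact sequence of second countable locally compact groups with A discrete in E, and let σ be a Borel section of p: E → G. Then there exists a Borel subset X of E that is relatively compact, symmetric (X = X⁻¹), of positive Haar measure, and such that σ(p(X)) is relatively compact. -/
open MeasureTheory

/-- Let `0 → A → E → G → 1` be an exact sequence of second countable locally
compact groups with `A = ker p` discrete in `E`, and let `σ` be a Borel section of `p : E → G`.
Then there is a Borel subset `X` of `E` which is relatively compact, symmetric, of positive Haar
measure, and such that `σ(p(X))` is relatively compact. -/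
theorem exists_good_borel_set_for_section
    {E G : Type*} [Group E] [TopologicalSpace E] [IsTopologicalGroup E]
    [LocallyCompactSpace E] [SecondCountableTopology E]
    [Group G] [TopologicalSpace G] [IsTopologicalGroup G]
    [LocallyCompactSpace G] [SecondCountableTopology G]
    [MeasurableSpace E] [BorelSpace E] [MeasurableSpace G] [BorelSpace G]
    (p : E →* G) (hpcont : Continuous p) (hpopen : IsOpenMap p)
    (hpsurj : Function.Surjective p) [DiscreteTopology ↥p.ker]
    (μ : Measure E) [μ.IsHaarMeasure]
    (σ : G → E) (hσmeas : Measurable σ) (hσsec : ∀ g : G, p (σ g) = g) :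
    ∃ X : Set E, MeasurableSet X ∧ IsCompact (closure X) ∧ 0 < μ X ∧ X = X⁻¹ ∧
      IsCompact (closure (σ '' (p '' X))) := by
  -- choose a compact neighborhood of 1 and a symmetric open set inside it
  obtain ⟨K, hKc, hKmem⟩ := exists_compact_mem_nhds (1 : E)
  set U : Set E := interior K ∩ (interior K)⁻¹ with hU
  have hUopen : IsOpen U := (isOpen_interior).inter (isOpen_interior.inv)
  have hUsymm : U⁻¹ = U := by
    simp [hU, Set.inter_inv, Set.inter_comm]
  have hUne : (1 : E) ∈ U := by
    constructor
    · exact mem_interior_iff_mem_nhds.2 hKmem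
    · simp [mem_interior_iff_mem_nhds.2 hKmem]
  have hUsub : U ⊆ K := fun x hx => interior_subset hx.1
  have hclU : IsCompact (closure U) := by
    exact (hKc.closure).of_isClosed_subset isClosed_closure
      (closure_mono (hUsub.trans subset_closure) |>.trans (by rw [closure_closure]))
  -- compact exhaustion of E
  obtain ⟨Kex⟩ : Nonempty (CompactExhaustion E) := ⟨CompactExhaustion.choice E⟩
  set C : ℕ → Set E := fun n => closure (Kex n) with hC
  have hCc : ∀ n, IsCompact (C n) := fun n => (Kex.isCompact n).closure
  have hCm : Monotone C := fun m n h => closure_mono (Kex.subset h)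
  -- the good Borel sets
  set T : ℕ → Set G := fun n => (p '' U) ∩ σ ⁻¹' (C n) ∩ {g | σ g⁻¹ ∈ C n} with hT
  set X : ℕ → Set E := fun n => U ∩ p ⁻¹' (T n) with hX
  have hTmeas : ∀ n, MeasurableSet (T n) := by
    intro n
    refine (((hpopen U hUopen).measurableSet).inter
      (hσmeas (isClosed_closure.measurableSet))).inter ?_
    exact (hσmeas.comp measurable_inv) (isClosed_closure.measurableSet)
  have hXmeas : ∀ n, MeasurableSet (X n) := fun n =>
    (hUopen.measurableSet).inter (hpcont.measurable (hTmeas n))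
  -- union of X n is U
  have hUnion : (⋃ n, X n) = U := by
    apply Set.Subset.antisymm
    · exact Set.iUnion_subset fun n => Set.inter_subset_left
    · intro e he
      obtain ⟨m1, hm1⟩ := Kex.exists_mem (σ (p e))
      obtain ⟨m2, hm2⟩ := Kex.exists_mem (σ ((p e)⁻¹))
      refine Set.mem_iUnion.2 ⟨max m1 m2, he, ?_, ?_⟩
      · exact ⟨⟨e, he, rfl⟩, hCm (le_max_left m1 m2) (subset_closure hm1)⟩
      · exact hCm (le_max_right m1 m2) (subset_closure hm2)
  -- find n with positive measure
  have hUpos : 0 < μ U := hUopen.measure_pos μ ⟨1, hUne⟩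
  have : ∃ n, 0 < μ (X n) := by
    by_contra h
    push_neg at h
    have h0 : ∀ n, μ (X n) = 0 := fun n => le_antisymm (h n) zero_le
    have : μ U = 0 := by
      rw [← hUnion]
      exact measure_iUnion_null h0
    exact absurd this hUpos.ne'
  obtain ⟨n, hn⟩ := this
  -- symmetry of T n
  have hTsymm : ∀ g, g ∈ T n → g⁻¹ ∈ T n := by
    rintro g ⟨⟨⟨e, heU, rfl⟩, hg1⟩, hg2⟩
    refine ⟨⟨⟨e⁻¹, ?_, by simp⟩, hg2⟩, by simpa using hg1⟩
    rw [← hUsymm]; exact Set.inv_mem_inv.2 heU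
  refine ⟨X n, hXmeas n, ?_, hn, ?_, ?_⟩
  · exact hclU.of_isClosed_subset isClosed_closure
      (closure_mono Set.inter_subset_left)
  · have hTeq : (T n)⁻¹ = T n := by
      ext g
      exact ⟨fun h => by simpa using hTsymm _ h, fun h => hTsymm _ h⟩
    have hpre : (p ⁻¹' (T n))⁻¹ = p ⁻¹' ((T n)⁻¹) := by
      ext x; simp [Set.mem_inv, map_inv]
    have : (X n)⁻¹ = X n := by
      rw [hX]
      simp only [Set.inter_inv, hUsymm, hpre, hTeq]
    exact this.symm
  · refine (hCc n).closure.of_isClosed_subset isClosed_closure (closure_mono ?_)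
    rintro x ⟨g, hg, rfl⟩
    obtain ⟨e, ⟨heU, heT⟩, rfl⟩ := hg
    have hmem : σ (p e) ∈ C n := heT.1.2
    exact hmem
end

section
/- Let p: X → Y and q: Y → Z be surjective group homomorphisms with central kernels, σ a section of p and τ a section of q whose associated 2-cocycles c_σ and c_τ have finite range. If σ(ker q) is central in X, then the cocycle c_{στ} associated to the section σ∘τ of q∘p has finite range. -/
open Pointwise


/-- Let `p : X → Y` and `q : Y → Z` be surjective homomorphisms with central
kernels, with sections `σ`, `τ` whose cocycles have finite range.  If `σ(ker q)` is central in
`X`, then the cocycle of the section `σ ∘ τ` of `q ∘ p` has finite range. -/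
theorem finite_range_cocycle_of_composition
    {X Y Z : Type*} [Group X] [Group Y] [Group Z]
    (p : X →* Y) (hp : Function.Surjective p) (hpker : p.ker ≤ Subgroup.center X)
    (q : Y →* Z) (hq : Function.Surjective q) (hqker : q.ker ≤ Subgroup.center Y)
    (σ : Y → X) (hσ : ∀ y, p (σ y) = y)
    (τ : Z → Y) (hτ : ∀ z, q (τ z) = z)
    (hcσ : (Set.range fun yy : Y × Y => σ yy.1 * σ yy.2 * (σ (yy.1 * yy.2))⁻¹).Finite)
    (hcτ : (Set.range fun zz : Z × Z => τ zz.1 * τ zz.2 * (τ (zz.1 * zz.2))⁻¹).Finite)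
    (hcentral : ∀ y ∈ q.ker, σ y ∈ Subgroup.center X) :
    (Set.range fun zz : Z × Z =>
      σ (τ zz.1) * σ (τ zz.2) * (σ (τ (zz.1 * zz.2)))⁻¹).Finite := by
  set A : Set X := Set.range fun yy : Y × Y => σ yy.1 * σ yy.2 * (σ (yy.1 * yy.2))⁻¹ with hA
  set B : Set Y := Set.range fun zz : Z × Z => τ zz.1 * τ zz.2 * (τ (zz.1 * zz.2))⁻¹ with hB
  have hfin : (A * A⁻¹ * (σ '' B)).Finite := (hcσ.mul hcσ.inv).mul (hcτ.image σ)
  refine hfin.subset ?_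
  rintro x ⟨⟨z₁, z₂⟩, rfl⟩
  set u : Y := τ z₁ * τ z₂ * (τ (z₁ * z₂))⁻¹ with hu
  set w : Y := τ (z₁ * z₂) with hw
  have ha : σ (τ z₁) * σ (τ z₂) * (σ (τ z₁ * τ z₂))⁻¹ ∈ A := ⟨(τ z₁, τ z₂), rfl⟩
  have hb : σ u * σ w * (σ (u * w))⁻¹ ∈ A := ⟨(u, w), rfl⟩
  have hs : σ u ∈ σ '' B := ⟨u, ⟨(z₁, z₂), rfl⟩, rfl⟩
  refine ⟨_, ⟨_, ha, _, Set.inv_mem_inv.mpr hb, rfl⟩, _, hs, ?_⟩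
  have huw : u * w = τ z₁ * τ z₂ := by rw [hu, hw]; group
  rw [huw]
  group
  rw [hw]
end
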